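/- Let n ≥ 1, r > 0, and let D ⊆ ℝⁿ be a Lebesgue measurable set with 0 < vol(D) < ∞ whose Lebesgue measure equals that of the closed Euclidean ball B(0, r). Then the second moment per dimension of the uniform distribution on D is at least that of the uniform distribution on B(0,r): (1/(n·vol(D))) · ∫_D ‖x‖² dx ≥ r²/(n+2). -/

import Mathlib

open MeasureTheory Set Metric

/-- If `D ⊆ ℝⁿ` is measurable with `0 < vol(D) < ∞` and `vol(D) = vol(B(0,r))`, then the
second moment per dimension of the uniform distribution on `D` is at least `r²/(n+2)`,
the second moment per dimension of the uniform distribution on the ball `B(0,r)`. -/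
theorem stmt_12 (n : ℕ) (hn : 1 ≤ n) (r : ℝ) (hr : 0 < r)
    (D : Set (EuclideanSpace ℝ (Fin n))) (hD : MeasurableSet D)
    (h0 : 0 < volume D) (hfin : volume D < ⊤)
    (hvol : volume D = volume (Metric.closedBall (0 : EuclideanSpace ℝ (Fin n)) r)) :
    ENNReal.ofReal (r ^ 2 / ((n : ℝ) + 2)) ≤
      (∫⁻ x in D, ENNReal.ofReal (‖x‖ ^ 2)) / ((n : ENNReal) * volume D) := by
  haveI : Nontrivial (EuclideanSpace ℝ (Fin n)) :=
    Module.nontrivial_of_finrank_pos (R := ℝ)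
      (by rw [finrank_euclideanSpace_fin]; omega)
  set B : Set (EuclideanSpace ℝ (Fin n)) := Metric.closedBall (0 : EuclideanSpace ℝ (Fin n)) r with hB
  have hBmeas : MeasurableSet B := measurableSet_closedBall
  set g : EuclideanSpace ℝ (Fin n) → ENNReal := fun x => ENNReal.ofReal (‖x‖ ^ 2) with hg
  have hgmeas : Measurable g := ((continuous_norm.pow 2).measurable).ennreal_ofReal
  have hfindim : Module.finrank ℝ (EuclideanSpace ℝ (Fin n)) = n := finrank_euclideanSpace_fin
  -- Step 1: comparison ∫⁻_B g ≤ ∫⁻_D g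
  have hinterfin : volume (D ∩ B) ≠ ⊤ := ((measure_mono Set.inter_subset_left).trans_lt hfin).ne
  have hdiffeq : volume (B \ D) = volume (D \ B) := by
    have h1 : volume (D \ B) + volume (D ∩ B) = volume D := measure_diff_add_inter D hBmeas
    have h2 : volume (B \ D) + volume (B ∩ D) = volume B := measure_diff_add_inter B hD
    rw [Set.inter_comm] at h2
    have : volume (D \ B) + volume (D ∩ B) = volume (B \ D) + volume (D ∩ B) := by
      rw [h1, h2, hvol]
    exact (ENNReal.add_right_inj hinterfin).mp
      (by rw [add_comm _ (volume (D ∩ B)), add_comm _ (volume (D ∩ B))] at this; exact this.symm)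
  have hcomp : (∫⁻ x in B, g x) ≤ ∫⁻ x in D, g x := by
    have hsD : (∫⁻ x in D ∩ B, g x) + ∫⁻ x in D \ B, g x = ∫⁻ x in D, g x :=
      lintegral_inter_add_diff g D hBmeas
    have hsB : (∫⁻ x in B ∩ D, g x) + ∫⁻ x in B \ D, g x = ∫⁻ x in B, g x :=
      lintegral_inter_add_diff g B hD
    rw [Set.inter_comm] at hsB
    rw [← hsD, ← hsB]
    refine add_le_add_right ?_ _
    calc (∫⁻ x in B \ D, g x) ≤ ∫⁻ _ in B \ D, ENNReal.ofReal (r ^ 2) := by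
          refine setLIntegral_mono measurable_const fun x hx => ?_
          refine ENNReal.ofReal_le_ofReal ?_
          have hxr : ‖x‖ ≤ r := by
            have := hx.1
            rwa [Metric.mem_closedBall, dist_zero_right] at this
          exact pow_le_pow_left₀ (norm_nonneg x) hxr 2
      _ = ENNReal.ofReal (r ^ 2) * volume (B \ D) := setLIntegral_const _ _
      _ = ENNReal.ofReal (r ^ 2) * volume (D \ B) := by rw [hdiffeq]
      _ = ∫⁻ _ in D \ B, ENNReal.ofReal (r ^ 2) := (setLIntegral_const _ _).symm
      _ ≤ ∫⁻ x in D \ B, g x := by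
          refine setLIntegral_mono hgmeas fun x hx => ?_
          refine ENNReal.ofReal_le_ofReal ?_
          have hxr : r < ‖x‖ := by
            have := hx.2
            rw [hB, Metric.mem_closedBall, dist_zero_right] at this
            exact lt_of_not_ge this
          exact pow_le_pow_left₀ hr.le hxr.le 2
  -- Step 2: compute ∫_B ‖x‖² exactly
  set c : ℝ := (volume (Metric.ball (0 : EuclideanSpace ℝ (Fin n)) 1)).toReal with hc
  have hcnonneg : 0 ≤ c := ENNReal.toReal_nonneg
  have hballint : ∫ x in B, ‖x‖ ^ 2 = n * (c * (r ^ (n + 2) / (n + 2))) := by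
    have key := integral_fun_norm_addHaar (volume : Measure (EuclideanSpace ℝ (Fin n)))
      (fun y : ℝ => if y ≤ r then y ^ 2 else 0)
    rw [hfindim] at key
    have hL : (∫ x : EuclideanSpace ℝ (Fin n), (fun y : ℝ => if y ≤ r then y ^ 2 else 0) ‖x‖) = ∫ x in B, ‖x‖ ^ 2 := by
      rw [← integral_indicator hBmeas]
      refine integral_congr_ae (Filter.Eventually.of_forall fun x => ?_)
      by_cases hx : ‖x‖ ≤ r <;>
        simp [hB, Set.indicator, Metric.mem_closedBall, dist_zero_right, hx]
    have hR : (∫ y in Set.Ioi (0 : ℝ), y ^ (n - 1) • (fun y : ℝ => if y ≤ r then y ^ 2 else 0) y)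
        = r ^ (n + 2) / (n + 2) := by
      have heq : ∀ y : ℝ, y ^ (n - 1) • (if y ≤ r then y ^ 2 else 0)
          = Set.indicator (Set.Iic r) (fun y => y ^ (n + 1)) y := by
        intro y
        by_cases hy : y ≤ r
        · simp only [Set.indicator, Set.mem_Iic, hy, if_true, smul_eq_mul]
          rw [← pow_add]
          congr 1
          omega
        · simp [Set.indicator, Set.mem_Iic, hy]
      simp only [heq]
      rw [setIntegral_indicator measurableSet_Iic]
      have hset : Set.Ioi (0 : ℝ) ∩ Set.Iic r = Set.Ioc 0 r := Set.Ioi_inter_Iic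
      rw [hset, ← intervalIntegral.integral_of_le hr.le, integral_pow]
      norm_num
      ring
    rw [hL, hR] at key
    rw [key]
    simp only [nsmul_eq_mul, smul_eq_mul]
    rfl
  have hBint : (∫⁻ x in B, g x) = ENNReal.ofReal (n * (c * (r ^ (n + 2) / (n + 2)))) := by
    rw [← hballint, ← ofReal_integral_eq_lintegral_ofReal]
    · exact ((continuous_norm.pow 2).continuousOn).integrableOn_compact (isCompact_closedBall _ _)
    · exact Filter.Eventually.of_forall fun x => sq_nonneg _
  -- Step 3: conclude
  have hvolB : volume D = ENNReal.ofReal (r ^ n) * volume (Metric.ball (0 : EuclideanSpace ℝ (Fin n)) 1) := by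
    rw [hvol, Measure.addHaar_closedBall _ _ hr.le, hfindim]
  have hballfin : volume (Metric.ball (0 : EuclideanSpace ℝ (Fin n)) 1) ≠ ⊤ := measure_ball_lt_top.ne
  have hballc : volume (Metric.ball (0 : EuclideanSpace ℝ (Fin n)) 1) = ENNReal.ofReal c := by
    rw [hc, ENNReal.ofReal_toReal hballfin]
  have hnD0 : (n : ENNReal) * volume D ≠ 0 := by
    refine mul_ne_zero ?_ h0.ne'
    simpa using (by omega : n ≠ 0)
  have hnDfin : (n : ENNReal) * volume D ≠ ⊤ := ENNReal.mul_ne_top (ENNReal.natCast_ne_top n) hfin.ne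
  rw [ENNReal.le_div_iff_mul_le (Or.inl hnD0) (Or.inl hnDfin)]
  calc ENNReal.ofReal (r ^ 2 / ((n : ℝ) + 2)) * ((n : ENNReal) * volume D)
      = ENNReal.ofReal (n * (c * (r ^ (n + 2) / (n + 2)))) := by
        rw [hvolB, hballc, ← ENNReal.ofReal_natCast n, ← ENNReal.ofReal_mul (by positivity),
          ← ENNReal.ofReal_mul (by positivity), ← ENNReal.ofReal_mul (by positivity)]
        congr 1
        rw [pow_add]
        ring
    _ = ∫⁻ x in B, g x := hBint.symm
    _ ≤ ∫⁻ x in D, g x := hcomp
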